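/- Let p be a real number with 0 < p ≤ 1. Then there exists a constant C > 0, depending only on p, such that for all real numbers u ≥ 0 and all real numbers w, v: | |u+w|^p (u+w) − |u+v|^p (u+v) − (p+1) u^p (w − v) | ≤ C ( |w|^p + |v|^p ) |w − v|. -/

import Mathlib

open Real

private lemma add_rpow_le (p : ℝ) (hp0 : 0 < p) (hp1 : p ≤ 1) {x y : ℝ} (hx : 0 ≤ x)
    (hy : 0 ≤ y) : (x + y) ^ p ≤ x ^ p + y ^ p := by
  have h := NNReal.rpow_add_le_add_rpow x.toNNReal y.toNNReal hp0.le hp1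
  have h' := NNReal.coe_le_coe.2 h
  push_cast at h'
  rwa [Real.coe_toNNReal _ hx, Real.coe_toNNReal _ hy] at h'

private lemma rpow_abs_sub_le (p : ℝ) (hp0 : 0 < p) (hp1 : p ≤ 1) (a b : ℝ) :
    |a| ^ p - |b| ^ p ≤ |a - b| ^ p := by
  have h1 : |a| ≤ |b| + |a - b| := by
    have := abs_sub_abs_le_abs_sub a b
    linarith [abs_nonneg (a - b)]
  have h2 : |a| ^ p ≤ (|b| + |a - b|) ^ p :=
    Real.rpow_le_rpow (abs_nonneg a) h1 hp0.le
  have h3 := add_rpow_le p hp0 hp1 (abs_nonneg b) (abs_nonneg (a - b))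
  linarith

private lemma hasDerivAt_abs_rpow_mul (p : ℝ) (hp0 : 0 < p) (x : ℝ) :
    HasDerivAt (fun t : ℝ => |t| ^ p * t) ((p + 1) * |x| ^ p) x := by
  rcases lt_trichotomy x 0 with hx | hx | hx
  · -- x < 0 : f = fun t => -((-t)^(p+1)) near x
    have hd : HasDerivAt (fun t : ℝ => -((-t) ^ (p + 1))) ((p + 1) * |x| ^ p) x := by
      have h1 : HasDerivAt (fun t : ℝ => (-t) ^ (p + 1))
          (((p + 1) * (-x) ^ (p + 1 - 1)) * (-1)) x :=
        (Real.hasDerivAt_rpow_const (p := p + 1) (Or.inl (by linarith))).comp x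
          (hasDerivAt_neg x)
      have h2 := h1.neg
      have h3 : (p + 1) * |x| ^ p = -((p + 1) * (-x) ^ (p + 1 - 1) * -1) := by
        rw [abs_of_neg hx]
        ring_nf
      rw [h3]
      exact h2
    refine hd.congr_of_eventuallyEq ?_
    filter_upwards [eventually_lt_nhds hx] with t ht
    rw [abs_of_neg ht, Real.rpow_add_one (by linarith : (-t) ≠ 0)]
    ring
  · -- x = 0
    subst hx
    rw [hasDerivAt_iff_tendsto_slope]
    have heq : ∀ t : ℝ, t ≠ 0 → slope (fun t : ℝ => |t| ^ p * t) 0 t = |t| ^ p := by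
      intro t ht
      rw [slope_def_field]
      field_simp
      ring
    have htend : Filter.Tendsto (fun t : ℝ => |t| ^ p) (nhdsWithin 0 {(0:ℝ)}ᶜ) (nhds 0) := by
      have hc : ContinuousAt (fun t : ℝ => |t| ^ p) 0 :=
        continuous_abs.continuousAt.rpow_const (Or.inr hp0.le)
      have h' := hc.tendsto.mono_left (nhdsWithin_le_nhds (s := {(0:ℝ)}ᶜ))
      simpa [Real.zero_rpow hp0.ne'] using h'
    have : (p + 1) * |(0:ℝ)| ^ p = 0 := by
      simp [Real.zero_rpow hp0.ne']
    rw [this]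
    refine htend.congr' ?_
    filter_upwards [self_mem_nhdsWithin] with t ht
    exact (heq t ht).symm
  · -- x > 0
    have hd : HasDerivAt (fun t : ℝ => t ^ (p + 1)) ((p + 1) * |x| ^ p) x := by
      have h1 : HasDerivAt (fun t : ℝ => t ^ (p + 1)) ((p + 1) * x ^ (p + 1 - 1)) x :=
        Real.hasDerivAt_rpow_const (Or.inl hx.ne')
      convert h1 using 1
      rw [abs_of_pos hx]
      ring_nf
    refine hd.congr_of_eventuallyEq ?_
    filter_upwards [eventually_gt_nhds hx] with t ht
    rw [abs_of_pos ht, Real.rpow_add_one ht.ne']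

/-- For `0 < p ≤ 1` there is a constant `C > 0` (depending only on `p`)
such that for all `u ≥ 0` and all `w, v ∈ ℝ`,
`| |u+w|^p (u+w) − |u+v|^p (u+v) − (p+1) u^p (w−v) | ≤ C (|w|^p + |v|^p) |w−v|`. -/
theorem pointwise_power_estimate (p : ℝ) (hp0 : 0 < p) (hp1 : p ≤ 1) :
    ∃ C : ℝ, 0 < C ∧ ∀ u : ℝ, 0 ≤ u → ∀ w v : ℝ,
      |(|u + w| ^ p) * (u + w) - (|u + v| ^ p) * (u + v) - (p + 1) * u ^ p * (w - v)|
        ≤ C * (|w| ^ p + |v| ^ p) * |w - v| := by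
  refine ⟨p + 1, by linarith, ?_⟩
  intro u hu w v
  set g : ℝ → ℝ := fun t => |t| ^ p * t - (p + 1) * u ^ p * t with hg
  set g' : ℝ → ℝ := fun t => (p + 1) * |t| ^ p - (p + 1) * u ^ p with hg'
  have hderiv : ∀ t : ℝ, HasDerivAt g (g' t) t := by
    intro t
    have h := (hasDerivAt_abs_rpow_mul p hp0 t).sub
      ((hasDerivAt_id t).const_mul ((p + 1) * u ^ p))
    simp only [id, mul_one] at h
    exact h
  set S : Set ℝ := segment ℝ (u + v) (u + w) with hS
  have hbound : ∀ t ∈ S, ‖g' t‖ ≤ (p + 1) * (|w| ^ p + |v| ^ p) := by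
    intro t ht
    rw [hS, segment_eq_uIcc] at ht
    obtain ⟨h1, h2⟩ := ht
    have htu : |t - u| ≤ max |v| |w| := by
      rw [abs_le]
      constructor
      · have : min (u + v) (u + w) = u + min v w := by
          rcases le_total v w with h | h <;> simp [min_eq_left, min_eq_right, h]
        rw [this] at h1
        have : -(max |v| |w|) ≤ min v w := by
          rcases le_total v w with h | h
          · simp only [min_eq_left h]
            have := neg_abs_le v
            have := le_max_left |v| |w|
            linarith
          · simp only [min_eq_right h]
            have := neg_abs_le w
            have := le_max_right |v| |w|
            linarith
        linarith
      · have : max (u + v) (u + w) = u + max v w := by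
          rcases le_total v w with h | h <;> simp [max_eq_left, max_eq_right, h]
        rw [this] at h2
        have : max v w ≤ max |v| |w| := by
          rcases le_total v w with h | h
          · simp only [max_eq_right h]
            exact le_trans (le_abs_self w) (le_max_right _ _)
          · simp only [max_eq_left h]
            exact le_trans (le_abs_self v) (le_max_left _ _)
        linarith
    have key : abs (|t| ^ p - u ^ p) ≤ |w| ^ p + |v| ^ p := by
      have hmax : |t - u| ^ p ≤ |w| ^ p + |v| ^ p := by
        have h1 : |t - u| ^ p ≤ (max |v| |w|) ^ p :=
          Real.rpow_le_rpow (abs_nonneg _) htu hp0.le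
        have h2 : (max |v| |w|) ^ p ≤ |w| ^ p + |v| ^ p := by
          rcases max_cases |v| |w| with ⟨he, _⟩ | ⟨he, _⟩ <;> rw [he] <;>
            [skip; skip] <;>
            nlinarith [Real.rpow_nonneg (abs_nonneg v) p, Real.rpow_nonneg (abs_nonneg w) p]
        linarith
      rw [abs_le]
      have hu' : u ^ p = |u| ^ p := by rw [abs_of_nonneg hu]
      constructor
      · have := rpow_abs_sub_le p hp0 hp1 u t
        rw [← hu'] at this
        have habs : |u - t| = |t - u| := abs_sub_comm u t
        rw [habs] at this
        linarith
      · have := rpow_abs_sub_le p hp0 hp1 t u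
        rw [← hu'] at this
        linarith
    have : ‖g' t‖ = (p + 1) * abs (|t| ^ p - u ^ p) := by
      rw [hg']
      simp only [Real.norm_eq_abs]
      rw [← mul_sub, abs_mul, abs_of_pos (by linarith : (0:ℝ) < p + 1)]
    rw [this]
    have hp1' : (0:ℝ) < p + 1 := by linarith
    exact mul_le_mul_of_nonneg_left key hp1'.le
  have hmvt := Convex.norm_image_sub_le_of_norm_hasDerivWithin_le
    (f := g) (f' := g') (C := (p + 1) * (|w| ^ p + |v| ^ p)) (s := S)
    (fun t ht => (hderiv t).hasDerivWithinAt) hbound (convex_segment _ _)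
    (left_mem_segment ℝ _ _) (right_mem_segment ℝ _ _)
  have hval : g (u + w) - g (u + v)
      = (|u + w| ^ p) * (u + w) - (|u + v| ^ p) * (u + v) - (p + 1) * u ^ p * (w - v) := by
    rw [hg]; ring
  have hnorm : ‖(u + w) - (u + v)‖ = |w - v| := by
    rw [Real.norm_eq_abs]; ring_nf
  calc |(|u + w| ^ p) * (u + w) - (|u + v| ^ p) * (u + v) - (p + 1) * u ^ p * (w - v)|
      = ‖g (u + w) - g (u + v)‖ := by rw [hval, Real.norm_eq_abs]
    _ ≤ (p + 1) * (|w| ^ p + |v| ^ p) * ‖(u + w) - (u + v)‖ := hmvt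
    _ = (p + 1) * (|w| ^ p + |v| ^ p) * |w - v| := by rw [hnorm]
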